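/- For every x ∈ ℝ, W_{0,0}(x) = (1/√2) V_0(x/√2). -/

import Mathlib

open MeasureTheory

open Real Set ENNReal in
private theorem Real.lintegral_comp_polarCoord_symm' (f : ℝ × ℝ → ℝ≥0∞) :
    (∫⁻ p in polarCoord.target, ENNReal.ofReal p.1 * f (polarCoord.symm p)) = ∫⁻ p, f p := by
  set B : ℝ × ℝ → ℝ × ℝ →L[ℝ] ℝ × ℝ := fun p =>
    LinearMap.toContinuousLinearMap (Matrix.toLin (Module.Basis.finTwoProd ℝ) (Module.Basis.finTwoProd ℝ)
      !![Real.cos p.2, -p.1 * Real.sin p.2; Real.sin p.2, p.1 * Real.cos p.2])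
  have A : ∀ p ∈ polarCoord.target, HasFDerivWithinAt polarCoord.symm (B p) polarCoord.target p :=
    fun p _ => (hasFDerivAt_polarCoord_symm p).hasFDerivWithinAt
  have B_det : ∀ p, (B p).det = p.1 := by
    intro p
    conv_rhs => rw [← one_mul p.1, ← cos_sq_add_sin_sq p.2]
    simp only [B, neg_mul, LinearMap.det_toContinuousLinearMap, LinearMap.det_toLin,
      Matrix.det_fin_two_of, sub_neg_eq_add]
    ring
  symm
  calc
    ∫⁻ p, f p = ∫⁻ p in polarCoord.source, f p := by
      rw [← setLIntegral_univ]
      exact (setLIntegral_congr polarCoord_source_ae_eq_univ.symm)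
    _ = ∫⁻ p in polarCoord.symm '' polarCoord.target, f p := by
      rw [polarCoord.symm_image_target_eq_source]
    _ = ∫⁻ p in polarCoord.target, ENNReal.ofReal |(B p).det| * f (polarCoord.symm p) := by
      apply lintegral_image_eq_lintegral_abs_det_fderiv_mul volume
        polarCoord.open_target.measurableSet A
      exact polarCoord.symm.injOn
    _ = ∫⁻ p in polarCoord.target, ENNReal.ofReal p.1 * f (polarCoord.symm p) := by
      refine setLIntegral_congr_fun_ae polarCoord.open_target.measurableSet
        (Filter.Eventually.of_forall fun p hp => ?_)
      rw [B_det, abs_of_pos hp.1]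

open Real Set ENNReal in
private theorem gauss2' :
    ∫⁻ ζ : ℂ, ENNReal.ofReal (Real.exp (-(2 * ‖ζ‖ ^ 2))) = ENNReal.ofReal (π / 2) := by
  have hint : Integrable (fun v : ℂ => Real.exp (-(2 * ‖v‖ ^ 2))) := by
    have h := (GaussianFourier.integrable_cexp_neg_mul_sq_norm_add
      (b := (2:ℂ)) (by norm_num) 0 (0:ℂ)).norm
    refine h.congr (Filter.Eventually.of_forall fun v => ?_)
    simp [Complex.norm_exp, ← Complex.ofReal_pow, neg_mul]
  rw [← ofReal_integral_eq_lintegral_ofReal hint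
    (Filter.Eventually.of_forall fun v => (Real.exp_pos _).le)]
  congr 1
  have h2 := GaussianFourier.integral_rexp_neg_mul_sq_norm (V := ℂ) (by norm_num : (0:ℝ) < 2)
  rw [Complex.finrank_real_complex] at h2
  simp only [neg_mul] at h2
  rw [h2]
  norm_num

open Real Set ENNReal in
private theorem Complex.lintegral_comp_polarCoord_symm' (f : ℂ → ℝ≥0∞) :
    (∫⁻ p in polarCoord.target, ENNReal.ofReal p.1 * f (Complex.polarCoord.symm p)) =
      ∫⁻ p, f p := by
  rw [← (Complex.volume_preserving_equiv_real_prod.symm).lintegral_comp_emb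
    Complex.measurableEquivRealProd.symm.measurableEmbedding,
    ← Real.lintegral_comp_polarCoord_symm']
  rfl

open Real Set ENNReal in
private theorem lintegral_image_eq_lintegral_abs_deriv_mul' {s : Set ℝ} {f f' : ℝ → ℝ}
    (hs : MeasurableSet s) (hf' : ∀ x ∈ s, HasDerivWithinAt f (f' x) s x) (hf : Set.InjOn f s)
    (g : ℝ → ℝ≥0∞) : ∫⁻ x in f '' s, g x = ∫⁻ x in s, ENNReal.ofReal |f' x| * g (f x) := by
  simpa only [ContinuousLinearMap.det_toSpanSingleton] using
    lintegral_image_eq_lintegral_abs_det_fderiv_mul volume hs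
      (fun x hx => (hf' x hx).hasFDerivWithinAt) hf g

open Real in
private theorem abs_sq_key (w ζ : ℂ) :
    ‖w + ζ‖ ^ 2 + ‖ζ‖ ^ 2
      = 2 * ‖ζ + w / 2‖ ^ 2 + ‖w‖ ^ 2 / 2 := by
  simp only [Complex.sq_norm, Complex.normSq_apply, Complex.add_re, Complex.add_im,
    Complex.div_re, Complex.div_im, Complex.normSq_ofNat, Complex.re_ofNat, Complex.im_ofNat]
  ring

/-- The regularized Coulomb potential
`V_m(x) = (1/m!) ∫₀^∞ u^m e^{−u} (x² + u)^{−1/2} du`. -/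
noncomputable def Vm (m : ℕ) (x : ℝ) : ℝ :=
  (1 / (m.factorial : ℝ)) *
    ∫ u in Set.Ioi (0 : ℝ), u ^ m * Real.exp (-u) / Real.sqrt (x ^ 2 + u)

/-- The Landau state `γ_m(ζ) = (π m!)^{−1/2} ζ̄^m e^{−|ζ|²/2}` on `ℝ² ≅ ℂ`. -/
noncomputable def landau (m : ℕ) (ζ : ℂ) : ℂ :=
  (((Real.pi * (m.factorial : ℝ)) ^ (-(1 : ℝ) / 2) : ℝ) : ℂ) *
    (starRingEnd ℂ ζ) ^ m * Complex.exp ((((-(‖ζ‖) ^ 2 / 2 : ℝ)) : ℂ))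

/-- The effective interaction
`W_{m,m'}(x) = ∫∫ |γ_m(ζ₁)|² |γ_{m'}(ζ₂)|² (x² + |ζ₁ − ζ₂|²)^{−1/2} dζ₁ dζ₂`. -/
noncomputable def Wpair (m m' : ℕ) (x : ℝ) : ℝ :=
  ∫ ζ : ℂ × ℂ,
    ‖landau m ζ.1‖ ^ 2 * ‖landau m' ζ.2‖ ^ 2 /
      Real.sqrt (x ^ 2 + ‖ζ.1 - ζ.2‖ ^ 2)

open Real in
private theorem landau0_sq (ζ : ℂ) :
    ‖landau 0 ζ‖ ^ 2 = π⁻¹ * Real.exp (-(‖ζ‖ ^ 2)) := by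
  simp only [landau, pow_zero, mul_one, Nat.factorial_zero, Nat.cast_one]
  rw [norm_mul, Complex.norm_exp, Complex.norm_real, Real.norm_eq_abs]
  simp only [Complex.ofReal_re]
  rw [mul_pow, ← Real.exp_nat_mul]
  rw [abs_of_nonneg (by positivity), ← Real.rpow_natCast _ 2, ← Real.rpow_mul pi_pos.le]
  norm_num
  rw [Real.rpow_neg_one]
  ring_nf

open Real Set ENNReal in
/-- `W_{0,0}(x) = (1/√2) V_0(x/√2)` for every `x`. -/
theorem W00_eq (x : ℝ) :
    Wpair 0 0 x = (1 / Real.sqrt 2) * Vm 0 (x / Real.sqrt 2) := by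
  classical
  set y : ℝ := x / Real.sqrt 2 with hy
  set G : ℂ × ℂ → ℝ := fun p =>
    Real.exp (-(‖p.1‖ ^ 2)) * Real.exp (-(‖p.2‖ ^ 2)) /
      Real.sqrt (x ^ 2 + ‖p.1 - p.2‖ ^ 2) with hG
  have habs : Measurable fun z : ℂ => ‖z‖ := continuous_norm.measurable
  have hGm : Measurable G := by
    apply Measurable.div
    · exact ((((habs.comp measurable_fst).pow_const 2).neg).exp).mul
        ((((habs.comp measurable_snd).pow_const 2).neg).exp)
    · exact (measurable_const.add
        ((habs.comp (measurable_fst.sub measurable_snd)).pow_const 2)).sqrt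
  set J : ℝ≥0∞ := ∫⁻ u in Set.Ioi (0:ℝ),
      ENNReal.ofReal (Real.exp (-u) / Real.sqrt (y ^ 2 + u)) with hJ
  -- Step 1 : Wpair as a lintegral
  have h1 : Wpair 0 0 x = π⁻¹ * π⁻¹ * (∫⁻ p : ℂ × ℂ, ENNReal.ofReal (G p)).toReal := by
    have h0 : Wpair 0 0 x = ∫ p : ℂ × ℂ, π⁻¹ * π⁻¹ * G p := by
      rw [Wpair]
      congr 1 with p
      simp only [landau0_sq, hG]
      ring
    rw [h0, integral_const_mul, integral_eq_lintegral_of_nonneg_ae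
      (Filter.Eventually.of_forall fun p => by positivity) hGm.aestronglyMeasurable]
  -- Step 2 : Fubini and translation in the first variable
  have h2 : (∫⁻ p : ℂ × ℂ, ENNReal.ofReal (G p))
      = ∫⁻ ζ₂ : ℂ, ∫⁻ w : ℂ, ENNReal.ofReal
          (Real.exp (-(‖w + ζ₂‖ ^ 2)) * Real.exp (-(‖ζ₂‖ ^ 2)) /
            Real.sqrt (x ^ 2 + ‖w‖ ^ 2)) := by
    rw [Measure.volume_eq_prod, lintegral_prod_symm _ hGm.ennreal_ofReal.aemeasurable]
    refine lintegral_congr fun ζ₂ => ?_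
    rw [← lintegral_add_right_eq_self (fun ζ₁ => ENNReal.ofReal (G (ζ₁, ζ₂))) ζ₂]
    refine lintegral_congr fun w => ?_
    simp only [hG, add_sub_cancel_right]
  -- Step 3 : swap the order of integration
  have h3 : (∫⁻ ζ₂ : ℂ, ∫⁻ w : ℂ, ENNReal.ofReal
          (Real.exp (-(‖w + ζ₂‖ ^ 2)) * Real.exp (-(‖ζ₂‖ ^ 2)) /
            Real.sqrt (x ^ 2 + ‖w‖ ^ 2)))
      = ∫⁻ w : ℂ, ∫⁻ ζ₂ : ℂ, ENNReal.ofReal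
          (Real.exp (-(‖w + ζ₂‖ ^ 2)) * Real.exp (-(‖ζ₂‖ ^ 2)) /
            Real.sqrt (x ^ 2 + ‖w‖ ^ 2)) := by
    refine lintegral_lintegral_swap ?_
    apply Measurable.aemeasurable
    apply Measurable.ennreal_ofReal
    apply Measurable.div
    · exact ((((habs.comp (measurable_snd.add measurable_fst)).pow_const 2).neg).exp).mul
        ((((habs.comp measurable_fst).pow_const 2).neg).exp)
    · exact (measurable_const.add
        ((habs.comp measurable_snd).pow_const 2)).sqrt
  -- Step 4 : the inner Gaussian integral
  have h4 : ∀ w : ℂ, (∫⁻ ζ₂ : ℂ, ENNReal.ofReal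
          (Real.exp (-(‖w + ζ₂‖ ^ 2)) * Real.exp (-(‖ζ₂‖ ^ 2)) /
            Real.sqrt (x ^ 2 + ‖w‖ ^ 2)))
      = ENNReal.ofReal (π / 2) *
          ENNReal.ofReal (Real.exp (-(‖w‖ ^ 2 / 2)) /
            Real.sqrt (x ^ 2 + ‖w‖ ^ 2)) := by
    intro w
    have hpt : ∀ ζ : ℂ,
        Real.exp (-(‖w + ζ‖ ^ 2)) * Real.exp (-(‖ζ‖ ^ 2))
          = Real.exp (-(2 * ‖ζ + w / 2‖ ^ 2)) * Real.exp (-(‖w‖ ^ 2 / 2)) := by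
      intro ζ
      rw [← Real.exp_add, ← Real.exp_add, ← neg_add, ← neg_add, abs_sq_key]
    calc
      (∫⁻ ζ : ℂ, ENNReal.ofReal
          (Real.exp (-(‖w + ζ‖ ^ 2)) * Real.exp (-(‖ζ‖ ^ 2)) /
            Real.sqrt (x ^ 2 + ‖w‖ ^ 2)))
          = ∫⁻ ζ : ℂ, ENNReal.ofReal
              (Real.exp (-(2 * ‖ζ + w / 2‖ ^ 2)) * Real.exp (-(‖w‖ ^ 2 / 2)))
            * ENNReal.ofReal (1 / Real.sqrt (x ^ 2 + ‖w‖ ^ 2)) := by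
        refine lintegral_congr fun ζ => ?_
        rw [hpt ζ, div_eq_mul_one_div, ENNReal.ofReal_mul (by positivity)]
      _ = (∫⁻ ζ : ℂ, ENNReal.ofReal
              (Real.exp (-(2 * ‖ζ + w / 2‖ ^ 2)))
            * ENNReal.ofReal (Real.exp (-(‖w‖ ^ 2 / 2))))
            * ENNReal.ofReal (1 / Real.sqrt (x ^ 2 + ‖w‖ ^ 2)) := by
        rw [← lintegral_mul_const' _ _ ENNReal.ofReal_ne_top]
        refine lintegral_congr fun ζ => ?_
        rw [ENNReal.ofReal_mul (by positivity)]
      _ = (ENNReal.ofReal (π / 2) * ENNReal.ofReal (Real.exp (-(‖w‖ ^ 2 / 2))))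
            * ENNReal.ofReal (1 / Real.sqrt (x ^ 2 + ‖w‖ ^ 2)) := by
        have hg : (∫⁻ a : ℂ, ENNReal.ofReal
            (Real.exp (-(2 * ‖a + w / 2‖ ^ 2)))) = ENNReal.ofReal (π / 2) :=
          (lintegral_add_right_eq_self
            (fun ζ : ℂ => ENNReal.ofReal (Real.exp (-(2 * ‖ζ‖ ^ 2)))) (w / 2)).trans
            gauss2'
        rw [lintegral_mul_const' _ _ ENNReal.ofReal_ne_top, hg]
      _ = ENNReal.ofReal (π / 2) *
          ENNReal.ofReal (Real.exp (-(‖w‖ ^ 2 / 2)) /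
            Real.sqrt (x ^ 2 + ‖w‖ ^ 2)) := by
        rw [mul_assoc, ← ENNReal.ofReal_mul (by positivity), ← div_eq_mul_one_div]
  -- Step 5 : polar coordinates
  have h5 : (∫⁻ w : ℂ, ENNReal.ofReal (Real.exp (-(‖w‖ ^ 2 / 2)) /
            Real.sqrt (x ^ 2 + ‖w‖ ^ 2)))
      = (∫⁻ r in Ioi (0:ℝ), ENNReal.ofReal r *
          ENNReal.ofReal (Real.exp (-(r ^ 2 / 2)) / Real.sqrt (x ^ 2 + r ^ 2)))
        * ENNReal.ofReal (2 * π) := by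
    rw [← Complex.lintegral_comp_polarCoord_symm'
      (fun w => ENNReal.ofReal (Real.exp (-(‖w‖ ^ 2 / 2)) /
        Real.sqrt (x ^ 2 + ‖w‖ ^ 2)))]
    simp only [Complex.norm_polarCoord_symm, sq_abs]
    have htarget : polarCoord.target = Ioi (0:ℝ) ×ˢ Ioo (-π) π := rfl
    rw [htarget, Measure.volume_eq_prod, ← Measure.prod_restrict, lintegral_prod _ ?_]
    · rw [← lintegral_mul_const' _ _ ENNReal.ofReal_ne_top]
      refine setLIntegral_congr_fun_ae measurableSet_Ioi
        (Filter.Eventually.of_forall fun r hr => ?_)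
      simp only
      rw [setLIntegral_const, Real.volume_Ioo]
      congr 1
      ring_nf
    · apply Measurable.aemeasurable
      apply ((measurable_fst.ennreal_ofReal).mul ?_)
      apply Measurable.ennreal_ofReal
      exact ((((measurable_fst.pow_const 2).div_const 2).neg).exp).div
        ((measurable_const.add (measurable_fst.pow_const 2)).sqrt)
  -- Step 6 : radial substitution u = r²/2
  have h6 : (∫⁻ r in Ioi (0:ℝ), ENNReal.ofReal r *
          ENNReal.ofReal (Real.exp (-(r ^ 2 / 2)) / Real.sqrt (x ^ 2 + r ^ 2)))
      = ∫⁻ u in Ioi (0:ℝ), ENNReal.ofReal (Real.exp (-u) / Real.sqrt (x ^ 2 + 2 * u)) := by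
    have himg : (fun r : ℝ => r ^ 2 / 2) '' Ioi 0 = Ioi 0 := by
      ext u
      constructor
      · rintro ⟨r, hr, rfl⟩
        exact div_pos (pow_pos hr 2) (two_pos : (0:ℝ) < 2)
      · intro hu
        simp only [mem_Ioi] at hu
        refine ⟨Real.sqrt (2 * u), Real.sqrt_pos.2 (by positivity), ?_⟩
        show Real.sqrt (2 * u) ^ 2 / 2 = u
        rw [Real.sq_sqrt (by positivity : (0:ℝ) ≤ 2 * u)]; ring
    have hderiv : ∀ r ∈ Ioi (0:ℝ),
        HasDerivWithinAt (fun r : ℝ => r ^ 2 / 2) r (Ioi 0) r := by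
      intro r _
      have := ((hasDerivAt_pow 2 r).div_const 2).hasDerivWithinAt (s := Ioi 0)
      exact this.congr_deriv (by simp)
    have hinj : Set.InjOn (fun r : ℝ => r ^ 2 / 2) (Ioi 0) := by
      intro a ha b hb hab
      simp only [mem_Ioi] at ha hb
      have h2 : a ^ 2 = b ^ 2 := by dsimp at hab; linarith
      calc a = Real.sqrt (a ^ 2) := (Real.sqrt_sq ha.le).symm
        _ = Real.sqrt (b ^ 2) := by rw [h2]
        _ = b := Real.sqrt_sq hb.le
    conv_rhs => rw [← himg]
    rw [lintegral_image_eq_lintegral_abs_deriv_mul' measurableSet_Ioi hderiv hinj]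
    refine setLIntegral_congr_fun_ae measurableSet_Ioi
      (Filter.Eventually.of_forall fun r hr => ?_)
    rw [abs_of_pos hr]
    have h2 : 2 * (r ^ 2 / 2) = r ^ 2 := by ring
    rw [h2]
  -- Step 7 : rescaling to y = x/√2
  have h7 : (∫⁻ u in Ioi (0:ℝ), ENNReal.ofReal (Real.exp (-u) / Real.sqrt (x ^ 2 + 2 * u)))
      = ENNReal.ofReal (Real.sqrt 2)⁻¹ * J := by
    rw [hJ, ← lintegral_const_mul' _ _ ENNReal.ofReal_ne_top]
    refine setLIntegral_congr_fun_ae measurableSet_Ioi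
      (Filter.Eventually.of_forall fun u hu => ?_)
    rw [← ENNReal.ofReal_mul (by positivity)]
    congr 1
    have h2 : x ^ 2 + 2 * u = 2 * (y ^ 2 + u) := by
      rw [hy, div_pow, Real.sq_sqrt (by norm_num : (0:ℝ) ≤ 2)]
      ring
    rw [h2, Real.sqrt_mul (by norm_num : (0:ℝ) ≤ 2)]
    ring
  -- Step 8 : the right-hand side
  have h8 : Vm 0 y = J.toReal := by
    rw [Vm, hJ]
    simp only [pow_zero, one_mul, Nat.factorial_zero, Nat.cast_one, div_one]
    rw [integral_eq_lintegral_of_nonneg_ae (f := fun u => Real.exp (-u) / Real.sqrt (y ^ 2 + u))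
      (Filter.Eventually.of_forall fun u => by positivity)
      (((measurable_neg.exp).div
        ((measurable_const.add measurable_id')).sqrt).aestronglyMeasurable)]
  -- Put everything together
  rw [h1, h2, h3, lintegral_congr h4,
    lintegral_const_mul' _ _ ENNReal.ofReal_ne_top, h5, h6, h7, h8]
  rw [ENNReal.toReal_mul, ENNReal.toReal_mul, ENNReal.toReal_mul, ENNReal.toReal_ofReal
    (by positivity), ENNReal.toReal_ofReal (by positivity), ENNReal.toReal_ofReal (by positivity)]
  have hπ : (π : ℝ) ≠ 0 := Real.pi_ne_zero
  have hs2 : Real.sqrt 2 ≠ 0 := by positivity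
  field_simp
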